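/- With g as above for Minimum Linear Arrangement, for all 1 ≤ i ≤ s < j ≤ n: g(i,j,σ) = g(i,s,σ) + g(s+1,j,σ) + cut(S(i,s), S(s+1,j)) + (s+1−i)·cut(L(i−1), S(s+1,j)) + (j−s)·cut(S(i,s), R(j+1)), where S(a,b) = {σ(a),…,σ(b)}, L(i−1) = {σ(1),…,σ(i−1)}, R(j+1) = {σ(j+1),…,σ(n)}, and cut(A,B) is the number of edges with one endpoint in A and the other in B. -/

import Mathlib

/-- The partial objective `g(i,j,σ)` for Minimum Linear Arrangement
(positions are 0-indexed values in `[i,j] ⊆ {0,…,n-1}`). -/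
def mlaG (n : ℕ) (G : SimpleGraph (Fin n)) [DecidableRel G.Adj]
    (σ : Equiv.Perm (Fin n)) (i j : ℕ) : ℕ :=
  (∑ p ∈ Finset.univ.filter (fun p : Fin n × Fin n =>
      i ≤ (p.1 : ℕ) ∧ p.1 < p.2 ∧ (p.2 : ℕ) ≤ j ∧ G.Adj (σ p.1) (σ p.2)),
      ((p.2 : ℕ) - (p.1 : ℕ)))
  + (∑ p ∈ Finset.univ.filter (fun p : Fin n × Fin n =>
      (p.1 : ℕ) < i ∧ i ≤ (p.2 : ℕ) ∧ (p.2 : ℕ) ≤ j ∧ G.Adj (σ p.1) (σ p.2)),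
      ((p.2 : ℕ) - i))
  + (∑ p ∈ Finset.univ.filter (fun p : Fin n × Fin n =>
      i ≤ (p.1 : ℕ) ∧ (p.1 : ℕ) ≤ j ∧ j < (p.2 : ℕ) ∧ G.Adj (σ p.1) (σ p.2)),
      (j - (p.1 : ℕ)))

/-- Number of edges of `G` with one endpoint in `A` and the other in `B`
(`A` and `B` disjoint). -/
def mlaCut (n : ℕ) (G : SimpleGraph (Fin n)) [DecidableRel G.Adj]
    (A B : Finset (Fin n)) : ℕ :=
  ((A ×ˢ B).filter (fun p : Fin n × Fin n => G.Adj p.1 p.2)).card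

/-- Set of elements in positions `a..b`. -/
def posSet (n : ℕ) (σ : Equiv.Perm (Fin n)) (a b : ℕ) : Finset (Fin n) :=
  (Finset.univ.filter (fun t : Fin n => a ≤ (t : ℕ) ∧ (t : ℕ) ≤ b)).image σ

lemma mla_cut_pos (n : ℕ) (G : SimpleGraph (Fin n)) [DecidableRel G.Adj]
    (σ : Equiv.Perm (Fin n)) (PA PB : ℕ → Prop) [DecidablePred PA] [DecidablePred PB] :
    mlaCut n G ((Finset.univ.filter fun t : Fin n => PA (t : ℕ)).image σ)
      ((Finset.univ.filter fun t : Fin n => PB (t : ℕ)).image σ)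
    = (Finset.univ.filter fun p : Fin n × Fin n =>
        PA (p.1 : ℕ) ∧ PB (p.2 : ℕ) ∧ G.Adj (σ p.1) (σ p.2)).card := by
  unfold mlaCut
  apply Finset.card_nbij' (fun p => (σ.symm p.1, σ.symm p.2)) (fun p => (σ p.1, σ p.2))
  · intro p hp
    simp only [Finset.mem_coe, Finset.mem_filter, Finset.mem_product, Finset.mem_image, Finset.mem_univ,
      true_and] at hp ⊢
    obtain ⟨⟨⟨a, ha, hae⟩, ⟨b, hb, hbe⟩⟩, hadj⟩ := hp
    rw [← hae, ← hbe] at hadj ⊢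
    simpa [ha, hb] using hadj
  · intro p hp
    simp only [Finset.mem_coe, Finset.mem_filter, Finset.mem_product, Finset.mem_image, Finset.mem_univ,
      true_and] at hp ⊢
    exact ⟨⟨⟨p.1, hp.1, rfl⟩, ⟨p.2, hp.2.1, rfl⟩⟩, hp.2.2⟩
  · intro p hp; simp
  · intro p hp; simp

set_option maxHeartbeats 1000000 in
lemma mla_arith (i s j a b : ℕ) (h1 : i ≤ s) (h2 : s < j) :
  (if i ≤ a ∧ a < b ∧ b ≤ j then b - a else 0)
  + (if a < i ∧ i ≤ b ∧ b ≤ j then b - i else 0)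
  + (if i ≤ a ∧ a ≤ j ∧ j < b then j - a else 0)
  = ((if i ≤ a ∧ a < b ∧ b ≤ s then b - a else 0)
  + (if a < i ∧ i ≤ b ∧ b ≤ s then b - i else 0)
  + (if i ≤ a ∧ a ≤ s ∧ s < b then s - a else 0))
  + ((if s + 1 ≤ a ∧ a < b ∧ b ≤ j then b - a else 0)
  + (if a < s + 1 ∧ s + 1 ≤ b ∧ b ≤ j then b - (s + 1) else 0)
  + (if s + 1 ≤ a ∧ a ≤ j ∧ j < b then j - a else 0))
  + (if (i ≤ a ∧ a ≤ s) ∧ (s + 1 ≤ b ∧ b ≤ j) then 1 else 0)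
  + (if a < i ∧ (s + 1 ≤ b ∧ b ≤ j) then s + 1 - i else 0)
  + (if (i ≤ a ∧ a ≤ s) ∧ j < b then j - s else 0) := by
  rcases Nat.lt_or_ge a b with hab | hab
  · simp only [
      show (i ≤ a ∧ a < b ∧ b ≤ j) ↔ ((i ≤ a) ∧ (b ≤ j)) by omega,
      show (a < i ∧ i ≤ b ∧ b ≤ j) ↔ (¬(i ≤ a) ∧ (i ≤ b) ∧ (b ≤ j)) by omega,
      show (i ≤ a ∧ a ≤ j ∧ j < b) ↔ ((i ≤ a) ∧ (a ≤ j) ∧ ¬(b ≤ j)) by omega,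
      show (i ≤ a ∧ a < b ∧ b ≤ s) ↔ ((i ≤ a) ∧ (b ≤ s)) by omega,
      show (a < i ∧ i ≤ b ∧ b ≤ s) ↔ (¬(i ≤ a) ∧ (i ≤ b) ∧ (b ≤ s)) by omega,
      show (i ≤ a ∧ a ≤ s ∧ s < b) ↔ ((i ≤ a) ∧ (a ≤ s) ∧ ¬(b ≤ s)) by omega,
      show (s + 1 ≤ a ∧ a < b ∧ b ≤ j) ↔ (¬(a ≤ s) ∧ (b ≤ j)) by omega,
      show (a < s + 1 ∧ s + 1 ≤ b ∧ b ≤ j) ↔ ((a ≤ s) ∧ ¬(b ≤ s) ∧ (b ≤ j)) by omega,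
      show (s + 1 ≤ a ∧ a ≤ j ∧ j < b) ↔ (¬(a ≤ s) ∧ (a ≤ j) ∧ ¬(b ≤ j)) by omega,
      show ((i ≤ a ∧ a ≤ s) ∧ (s + 1 ≤ b ∧ b ≤ j)) ↔ ((i ≤ a) ∧ (a ≤ s) ∧ ¬(b ≤ s) ∧ (b ≤ j)) by omega,
      show (a < i ∧ (s + 1 ≤ b ∧ b ≤ j)) ↔ (¬(i ≤ a) ∧ ¬(b ≤ s) ∧ (b ≤ j)) by omega,
      show ((i ≤ a ∧ a ≤ s) ∧ j < b) ↔ ((i ≤ a) ∧ (a ≤ s) ∧ ¬(b ≤ j)) by omega]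
    by_cases hA1 : i ≤ a <;> by_cases hA2 : a ≤ s <;> by_cases hA3 : a ≤ j <;>
    by_cases hB1 : i ≤ b <;> by_cases hB2 : b ≤ s <;> by_cases hB3 : b ≤ j <;>
    simp only [hA1, hA2, hA3, hB1, hB2, hB3, not_true, not_false_eq_true,
      true_and, false_and, and_true, and_false, and_self, if_true, if_false,
      not_true_eq_false, ite_true, ite_false] <;>
    omega
  · simp only [
      show ¬(i ≤ a ∧ a < b ∧ b ≤ j) by omega,
      show ¬(a < i ∧ i ≤ b ∧ b ≤ j) by omega,
      show ¬(i ≤ a ∧ a ≤ j ∧ j < b) by omega,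
      show ¬(i ≤ a ∧ a < b ∧ b ≤ s) by omega,
      show ¬(a < i ∧ i ≤ b ∧ b ≤ s) by omega,
      show ¬(i ≤ a ∧ a ≤ s ∧ s < b) by omega,
      show ¬(s + 1 ≤ a ∧ a < b ∧ b ≤ j) by omega,
      show ¬(a < s + 1 ∧ s + 1 ≤ b ∧ b ≤ j) by omega,
      show ¬(s + 1 ≤ a ∧ a ≤ j ∧ j < b) by omega,
      show ¬((i ≤ a ∧ a ≤ s) ∧ (s + 1 ≤ b ∧ b ≤ j)) by omega,
      show ¬(a < i ∧ (s + 1 ≤ b ∧ b ≤ j)) by omega,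
      show ¬((i ≤ a ∧ a ≤ s) ∧ j < b) by omega,
      if_false, ite_false]

theorem stmt_8 (n : ℕ) (G : SimpleGraph (Fin n)) [DecidableRel G.Adj]
    (σ : Equiv.Perm (Fin n)) (i s j : ℕ) (h1 : i ≤ s) (h2 : s < j) (h3 : j ≤ n - 1) :
    mlaG n G σ i j =
      mlaG n G σ i s + mlaG n G σ (s + 1) j
      + mlaCut n G (posSet n σ i s) (posSet n σ (s + 1) j)
      + (s + 1 - i) * mlaCut n G
          ((Finset.univ.filter (fun t : Fin n => (t : ℕ) < i)).image σ)
          (posSet n σ (s + 1) j)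
      + (j - s) * mlaCut n G (posSet n σ i s)
          ((Finset.univ.filter (fun t : Fin n => j < (t : ℕ))).image σ) := by
  simp only [posSet]
  rw [mla_cut_pos n G σ (fun x => i ≤ x ∧ x ≤ s) (fun x => s + 1 ≤ x ∧ x ≤ j),
      mla_cut_pos n G σ (fun x => x < i) (fun x => s + 1 ≤ x ∧ x ≤ j),
      mla_cut_pos n G σ (fun x => i ≤ x ∧ x ≤ s) (fun x => j < x)]
  unfold mlaG
  simp only [Finset.sum_filter, Finset.card_filter, Finset.mul_sum, mul_ite, mul_one, mul_zero,
    ← Finset.sum_add_distrib, Fin.lt_def]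
  apply Finset.sum_congr rfl
  intro p _
  by_cases hadj : G.Adj (σ p.1) (σ p.2)
  · simp only [hadj, and_true]
    exact mla_arith i s j (p.1 : ℕ) (p.2 : ℕ) h1 h2
  · simp [hadj]
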